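/- Let $t_0, t_3 > 0$ with $8 t_0 t_3^2 \le 1$, and let $A = \frac{1 + 20 t_0 t_3^2 - 8 t_0^2 t_3^4 - (1 - 8 t_0 t_3^2)^{3/2}}{32 t_3^3}$, $r = \frac{\sqrt{1-\sqrt{1-8 t_0 t_3^2}}}{2 t_3}$, and $a = \frac{1-\sqrt{1-8 t_0 t_3^2}}{4 t_3}$. Then for every nonzero complex number $w$, the pair $z = r w + a w^{-2}$, $\xi = a w^2 + r w^{-1}$ satisfies the spectral curve equation $\xi^3 - t_3 z^2 \xi^2 - (t_0 t_3 + 1/t_3) z \xi + z^3 + A = 0$. -/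

import Mathlib

open Complex

/-- Rational parametrization of the spectral curve of the normal matrix model
with cubic potential. -/
theorem spectral_curve_parametrization
    (t0 t3 : ℝ) (ht0 : 0 < t0) (ht3 : 0 < t3) (h : 8 * t0 * t3 ^ 2 ≤ 1)
    (A r a : ℝ)
    (hA : A = (1 + 20 * t0 * t3 ^ 2 - 8 * t0 ^ 2 * t3 ^ 4
        - (1 - 8 * t0 * t3 ^ 2) ^ ((3 : ℝ) / 2)) / (32 * t3 ^ 3))
    (hr : r = Real.sqrt (1 - Real.sqrt (1 - 8 * t0 * t3 ^ 2)) / (2 * t3))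
    (ha : a = (1 - Real.sqrt (1 - 8 * t0 * t3 ^ 2)) / (4 * t3))
    (w : ℂ) (hw : w ≠ 0)
    (z ξ : ℂ)
    (hz : z = (r : ℂ) * w + (a : ℂ) * (w ^ 2)⁻¹)
    (hξ : ξ = (a : ℂ) * w ^ 2 + (r : ℂ) * w⁻¹) :
    ξ ^ 3 - (t3 : ℂ) * z ^ 2 * ξ ^ 2 - ((t0 : ℂ) * t3 + 1 / t3) * z * ξ
      + z ^ 3 + (A : ℂ) = 0 := by

  have ht3ne : t3 ≠ 0 := ne_of_gt ht3
  set s : ℝ := Real.sqrt (1 - 8 * t0 * t3 ^ 2) with hsdef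
  have hnn : (0:ℝ) ≤ 1 - 8 * t0 * t3 ^ 2 := by linarith
  have hs2 : s ^ 2 = 1 - 8 * t0 * t3 ^ 2 := Real.sq_sqrt hnn
  have hs1 : s ≤ 1 := by
    rw [hsdef]
    calc Real.sqrt (1 - 8 * t0 * t3 ^ 2) ≤ Real.sqrt 1 := Real.sqrt_le_sqrt (by nlinarith)
    _ = 1 := Real.sqrt_one
  have h1s : (0:ℝ) ≤ 1 - s := by linarith
  have hr2 : r ^ 2 = (1 - s) / (4 * t3 ^ 2) := by
    rw [hr, div_pow, Real.sq_sqrt h1s, show ((2:ℝ) * t3) ^ 2 = 4 * t3 ^ 2 by ring]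
  have hs' : s = 1 - 4 * t3 ^ 2 * r ^ 2 := by
    have h4 : (4 * t3 ^ 2 : ℝ) ≠ 0 := by positivity
    rw [hr2, mul_div_assoc', mul_div_cancel_left₀ _ h4]
    ring
  have h32 : (1 - 8 * t0 * t3 ^ 2) ^ ((3:ℝ) / 2) = s ^ 3 := by
    rw [show ((3:ℝ)/2) = (1/2) * 3 by norm_num, Real.rpow_mul hnn,
      ← Real.sqrt_eq_rpow, ← hsdef]
    rw [show (3:ℝ) = ((3:ℕ):ℝ) by norm_num, Real.rpow_natCast]
  have ht0' : t0 = r ^ 2 - 2 * t3 ^ 2 * r ^ 4 := by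
    have h8 : (8 * t3 ^ 2 : ℝ) ≠ 0 := by positivity
    apply mul_left_cancel₀ h8
    linear_combination hs2 - (s + 1 - 4 * t3 ^ 2 * r ^ 2) * hs'
  have hA3 : A = r ^ 2 * (1 - t3 ^ 2 * r ^ 2) ^ 3 / t3 := by
    rw [hA, h32, ht0', hs']
    field_simp
    ring
  have ha' : a = t3 * r ^ 2 := by
    rw [ha, hr2, hs']
    field_simp
  have haC : (a : ℂ) = (t3 : ℂ) * (r : ℂ) ^ 2 := by rw [ha']; push_cast; ring
  have ht0C : (t0 : ℂ) = (r : ℂ) ^ 2 - 2 * (t3 : ℂ) ^ 2 * (r : ℂ) ^ 4 := by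
    rw [ht0']; push_cast; ring
  have hAC : (A : ℂ) = (r : ℂ) ^ 2 * (1 - (t3 : ℂ) ^ 2 * (r : ℂ) ^ 2) ^ 3 / (t3 : ℂ) := by
    rw [hA3]; push_cast; ring
  have ht3C : (t3 : ℂ) ≠ 0 := by exact_mod_cast ht3ne
  have hW : w * w⁻¹ = 1 := mul_inv_cancel₀ hw
  have hT : (t3 : ℂ) * (t3 : ℂ)⁻¹ = 1 := mul_inv_cancel₀ ht3C
  rw [hz, hξ, haC, ht0C, hAC]
  linear_combination (-1 * (t3:ℂ)⁻¹ * (r:ℂ) ^ 2 + 4 * (t3:ℂ) * (r:ℂ) ^ 4 + -1 * (t3:ℂ) ^ 2 * (t3:ℂ)⁻¹ * (r:ℂ) ^ 4 + -3 * (t3:ℂ) ^ 3 * (r:ℂ) ^ 6 + (t3:ℂ) ^ 5 * (r:ℂ) ^ 8 + w⁻¹ ^ 3 * (t3:ℂ) ^ 2 * (r:ℂ) ^ 5 + -2 * w⁻¹ ^ 3 * (t3:ℂ) ^ 4 * (r:ℂ) ^ 7 + 5 * w * w⁻¹ * (t3:ℂ) * (r:ℂ) ^ 4 + -1 * w * w⁻¹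 * (t3:ℂ) ^ 2 * (t3:ℂ)⁻¹ * (r:ℂ) ^ 4 + -5 * w * w⁻¹ * (t3:ℂ) ^ 3 * (r:ℂ) ^ 6 + w * w⁻¹ * (t3:ℂ) ^ 5 * (r:ℂ) ^ 8 + -2 * w * w⁻¹ ^ 4 * (t3:ℂ) ^ 4 * (r:ℂ) ^ 7 + -4 * w ^ 2 * w⁻¹ ^ 2 * (t3:ℂ) ^ 3 * (r:ℂ) ^ 6 + -1 * w ^ 2 * w⁻¹ ^ 2 * (t3:ℂ) ^ 5 * (r:ℂ) ^ 8 + w ^ 3 * (t3:ℂ) ^ 2 * (r:ℂ) ^ 5 + -2 * w ^ 3 * (t3:ℂ) ^ 4 * (r:ℂ) ^ 7 + -1 * w ^ 3 * w⁻¹ ^ 3 * (t3:ℂ) ^ 5 * (r:ℂ) ^ 8 + -2 * w ^ 4 * w⁻¹ * (t3:ℂ) ^ 4 * (r:ℂ) ^ 7) * hW + (-4 * (t3:ℂ) * (r:ℂ) ^ 4 + 3 * (t3:ℂ) ^ 3 * (r:ℂ) ^ 6 + -1 * (t3:ℂ) ^ 5 * (r:ℂ) ^ 8 + -1 * w⁻¹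 ^ 3 * (r:ℂ) ^ 3 + -1 * w ^ 3 * (r:ℂ) ^ 3) * hT
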